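/- Let f_1,…,f_M be unit-norm vectors in ℝ^N with worst-case coherence μ := max_{i≠j} |⟨f_i,f_j⟩|, and let K ≥ 2 be an integer with 2K ≤ M. Then for every pair of nonempty subsets 𝒦, 𝒦' ⊆ {1,…,M} with |𝒦| ≤ K and |𝒦'| ≤ K, and every index m with m ∈ 𝒦 and m ∉ 𝒦', the distance between the equal-weight averages satisfies ‖(1/|𝒦|) Σ_{k∈𝒦} f_k − (1/|𝒦'|) Σ_{k∈𝒦'} f_k‖ ≥ √((1−(2K−1)μ)/(K(K−1))). -/

import Mathlib

set_option maxHeartbeats 1000000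


open scoped RealInnerProductSpace

/-- The worst-case coherence `μ = max_{i ≠ j} |⟨f_i, f_j⟩|` of a family of vectors. -/
noncomputable def coherence {n : ℕ} {M : ℕ} (f : Fin M → EuclideanSpace ℝ (Fin n)) : ℝ :=
  ⨆ (p : {p : Fin M × Fin M // p.1 ≠ p.2}), |⟪f p.1.1, f p.1.2⟫|

lemma abs_inner_le_coherence {n M : ℕ} (f : Fin M → EuclideanSpace ℝ (Fin n))
    {i j : Fin M} (h : i ≠ j) : |⟪f i, f j⟫| ≤ coherence f := by
  exact le_ciSup (f := fun p : {p : Fin M × Fin M // p.1 ≠ p.2} => |⟪f p.1.1, f p.1.2⟫|)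
    (Set.Finite.bddAbove (Set.finite_range _)) ⟨(i, j), h⟩

theorem stmt_3 {N M : ℕ} (f : Fin M → EuclideanSpace ℝ (Fin N))
    (hunit : ∀ i, ‖f i‖ = 1)
    (K : ℕ) (hK : 2 ≤ K) (h2K : 2 * K ≤ M)
    (𝒦 𝒦' : Finset (Fin M)) (h𝒦 : 𝒦.Nonempty) (h𝒦' : 𝒦'.Nonempty)
    (hc : 𝒦.card ≤ K) (hc' : 𝒦'.card ≤ K)
    (m : Fin M) (hm : m ∈ 𝒦) (hm' : m ∉ 𝒦') :
    Real.sqrt ((1 - (2 * (K : ℝ) - 1) * coherence f) / ((K : ℝ) * ((K : ℝ) - 1))) ≤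
      ‖(𝒦.card : ℝ)⁻¹ • ∑ k ∈ 𝒦, f k - (𝒦'.card : ℝ)⁻¹ • ∑ k ∈ 𝒦', f k‖ := by
  classical
  set μ := coherence f with hμdef
  have hM4 : 4 ≤ M := by omega
  have hμ0 : 0 ≤ μ := by
    have hne : ((⟨0, by omega⟩ : Fin M)) ≠ ⟨1, by omega⟩ := by simp [Fin.ext_iff]
    exact le_trans (abs_nonneg _) (abs_inner_le_coherence f hne)
  have hKR : (2:ℝ) ≤ (K:ℝ) := by exact_mod_cast hK
  have hKK0 : (0:ℝ) < (K:ℝ) * ((K:ℝ) - 1) := by nlinarith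
  set a : ℝ := ((𝒦.card : ℕ) : ℝ) with hadef
  set b : ℝ := ((𝒦'.card : ℕ) : ℝ) with hbdef
  have ha1 : (1:ℝ) ≤ a := by
    rw [hadef]; exact_mod_cast Nat.succ_le_of_lt (Finset.card_pos.mpr h𝒦)
  have hb1 : (1:ℝ) ≤ b := by
    rw [hbdef]; exact_mod_cast Nat.succ_le_of_lt (Finset.card_pos.mpr h𝒦')
  have haK : a ≤ (K:ℝ) := by rw [hadef]; exact_mod_cast hc
  have hbK : b ≤ (K:ℝ) := by rw [hbdef]; exact_mod_cast hc'
  have ha0 : (0:ℝ) < a := by linarith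
  have hb0 : (0:ℝ) < b := by linarith
  set d : Fin M → ℝ := fun i => (if i ∈ 𝒦 then a⁻¹ else 0) - (if i ∈ 𝒦' then b⁻¹ else 0)
    with hddef
  set L1 : ℝ := ∑ i : Fin M, |d i| with hL1def
  set L2 : ℝ := ∑ i : Fin M, d i ^ 2 with hL2def
  -- the vector as a single sum
  have hsum : ∀ (s : Finset (Fin M)) (c : ℝ),
      ∑ i : Fin M, (if i ∈ s then c else 0) • f i = c • ∑ k ∈ s, f k := by
    intro s c
    rw [Finset.smul_sum]
    simp [ite_smul, Finset.sum_ite_mem]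
  have hveq : (a⁻¹ • ∑ k ∈ 𝒦, f k - b⁻¹ • ∑ k ∈ 𝒦', f k) = ∑ i : Fin M, d i • f i := by
    rw [← hsum 𝒦 a⁻¹, ← hsum 𝒦' b⁻¹, ← Finset.sum_sub_distrib]
    exact Finset.sum_congr rfl fun i _ => (sub_smul _ _ _).symm
  set x := a⁻¹ • ∑ k ∈ 𝒦, f k - b⁻¹ • ∑ k ∈ 𝒦', f k with hxdef
  -- norm squared expansion
  have hinner : ‖x‖ ^ 2 = ∑ i : Fin M, ∑ j : Fin M, d i * d j * ⟪f i, f j⟫ := by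
    rw [← real_inner_self_eq_norm_sq, hveq, sum_inner]
    refine Finset.sum_congr rfl fun i _ => ?_
    rw [inner_sum]
    refine Finset.sum_congr rfl fun j _ => ?_
    rw [real_inner_smul_left, real_inner_smul_right]; ring
  have hsplit : ∑ i : Fin M, ∑ j : Fin M, d i * d j * ⟪f i, f j⟫
      = L2 + ∑ i : Fin M, ∑ j ∈ Finset.univ.erase i, d i * d j * ⟪f i, f j⟫ := by
    rw [hL2def, ← Finset.sum_add_distrib]
    refine Finset.sum_congr rfl fun i _ => ?_
    rw [← Finset.add_sum_erase _ _ (Finset.mem_univ i)]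
    have h1 : ⟪f i, f i⟫ = 1 := by
      rw [real_inner_self_eq_norm_sq, hunit i]; norm_num
    rw [h1]; ring
  -- off-diagonal bound
  have hoff : -(μ * (L1 ^ 2 - L2)) ≤ ∑ i : Fin M, ∑ j ∈ Finset.univ.erase i,
      d i * d j * ⟪f i, f j⟫ := by
    have hterm : ∀ i : Fin M, ∀ j ∈ Finset.univ.erase i,
        -(μ * (|d i| * |d j|)) ≤ d i * d j * ⟪f i, f j⟫ := by
      intro i j hj
      have hij : i ≠ j := (Finset.ne_of_mem_erase hj).symm
      have hin := abs_inner_le_coherence f hij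
      have h1 : |d i * d j * ⟪f i, f j⟫| ≤ |d i| * |d j| * μ := by
        rw [abs_mul, abs_mul]
        have h2 : (0:ℝ) ≤ |d i| * |d j| := by positivity
        nlinarith [abs_nonneg (⟪f i, f j⟫)]
      nlinarith [neg_abs_le (d i * d j * ⟪f i, f j⟫)]
    have hcount : ∑ i : Fin M, ∑ j ∈ Finset.univ.erase i, (|d i| * |d j|)
        = L1 ^ 2 - L2 := by
      have h1 : ∀ i : Fin M, ∑ j ∈ Finset.univ.erase i, (|d i| * |d j|)
          = |d i| * (L1 - |d i|) := by
        intro i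
        rw [← Finset.mul_sum, Finset.sum_erase_eq_sub (Finset.mem_univ i)]
      simp_rw [h1, mul_sub, Finset.sum_sub_distrib, ← Finset.sum_mul, ← sq, sq_abs]
      rw [hL1def, hL2def]; ring
    have hneg : -(μ * (L1 ^ 2 - L2))
        = ∑ i : Fin M, ∑ j ∈ Finset.univ.erase i, -(μ * (|d i| * |d j|)) := by
      rw [← hcount, Finset.mul_sum, ← Finset.sum_neg_distrib]
      refine Finset.sum_congr rfl fun i _ => ?_
      rw [Finset.mul_sum, ← Finset.sum_neg_distrib]
    rw [hneg]
    exact Finset.sum_le_sum fun i _ => Finset.sum_le_sum (hterm i)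
  -- value of L2
  set t : ℝ := (((𝒦 ∩ 𝒦').card : ℕ) : ℝ) with htdef
  have hL2val : L2 = a⁻¹ + b⁻¹ - 2 * t * (a⁻¹ * b⁻¹) := by
    have h1 : ∀ i : Fin M, d i ^ 2 = (if i ∈ 𝒦 then a⁻¹ ^ 2 else 0)
        + (if i ∈ 𝒦' then b⁻¹ ^ 2 else 0)
        - 2 * (if i ∈ 𝒦 ∩ 𝒦' then a⁻¹ * b⁻¹ else 0) := by
      intro i
      have hdi : d i = (if i ∈ 𝒦 then a⁻¹ else 0) - (if i ∈ 𝒦' then b⁻¹ else 0) := rfl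
      rw [hdi]
      by_cases h𝒦i : i ∈ 𝒦 <;> by_cases h𝒦'i : i ∈ 𝒦' <;>
        simp only [h𝒦i, h𝒦'i, Finset.mem_inter, if_true, if_false, and_true, and_false,
          true_and, false_and, if_neg (not_false), ite_true, ite_false] <;> ring
    rw [hL2def]
    simp_rw [h1]
    rw [Finset.sum_sub_distrib, Finset.sum_add_distrib]
    simp only [Finset.sum_ite_mem, Finset.univ_inter, Finset.sum_const, nsmul_eq_mul,
      ← Finset.mul_sum]
    rw [← hadef, ← hbdef, ← htdef]
    field_simp
  have hL2val' : L2 = (a + b - 2 * t) / (a * b) := by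
    rw [hL2val]; field_simp; ring
  -- lower bound on L2
  have ht0 : (0:ℝ) ≤ t := by positivity
  have htma : t + 1 ≤ a := by
    have hss : 𝒦 ∩ 𝒦' ⊂ 𝒦 := by
      refine Finset.ssubset_iff_of_subset Finset.inter_subset_left |>.mpr ?_
      exact ⟨m, hm, by simp [hm']⟩
    have := Finset.card_lt_card hss
    rw [hadef, htdef]
    exact_mod_cast this
  have hL2lb : ((K:ℝ) * ((K:ℝ) - 1))⁻¹ ≤ L2 := by
    rw [hL2val', inv_eq_one_div, div_le_div_iff₀ hKK0 (by positivity)]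
    by_cases hsub : 𝒦' ⊆ 𝒦
    · have htb : t = b := by
        rw [htdef, hbdef]
        congr 1
        rw [Finset.inter_eq_right.mpr hsub]
      have hba : b + 1 ≤ a := by
        have hss : 𝒦' ⊂ 𝒦 := ⟨hsub, fun h => hm' (h hm)⟩
        have := Finset.card_lt_card hss
        rw [hadef, hbdef]
        exact_mod_cast this
      nlinarith
    · have htb : t + 1 ≤ b := by
        have hss : 𝒦 ∩ 𝒦' ⊂ 𝒦' := by
          obtain ⟨j, hj, hj'⟩ := Finset.not_subset.mp hsub
          refine Finset.ssubset_iff_of_subset Finset.inter_subset_right |>.mpr ?_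
          exact ⟨j, hj, by simp [hj']⟩
        have := Finset.card_lt_card hss
        rw [htdef, hbdef]
        exact_mod_cast this
      nlinarith
  -- L1² ≤ 2K · L2
  have hL1sq : L1 ^ 2 ≤ 2 * (K:ℝ) * L2 := by
    have hsupp : L1 = ∑ i ∈ 𝒦 ∪ 𝒦', |d i| := by
      rw [hL1def]
      symm
      apply Finset.sum_subset (Finset.subset_univ _)
      intro i _ hi
      simp only [Finset.mem_union, not_or] at hi
      simp [hddef, hi.1, hi.2]
    have hcs := Finset.sum_mul_sq_le_sq_mul_sq (𝒦 ∪ 𝒦') (fun _ => (1:ℝ)) (fun i => |d i|)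
    simp only [one_mul, one_pow, Finset.sum_const, nsmul_eq_mul, mul_one, sq_abs] at hcs
    have hsub2 : ∑ i ∈ 𝒦 ∪ 𝒦', d i ^ 2 ≤ L2 := by
      rw [hL2def]
      exact Finset.sum_le_sum_of_subset_of_nonneg (Finset.subset_univ _)
        fun i _ _ => sq_nonneg _
    have hcard : (((𝒦 ∪ 𝒦').card : ℕ) : ℝ) ≤ 2 * (K:ℝ) := by
      have h1 : (𝒦 ∪ 𝒦').card ≤ 𝒦.card + 𝒦'.card := Finset.card_union_le _ _
      have h2 : (𝒦 ∪ 𝒦').card ≤ 2 * K := by omega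
      exact_mod_cast h2
    have hL2nn : 0 ≤ ∑ i ∈ 𝒦 ∪ 𝒦', d i ^ 2 := by positivity
    calc L1 ^ 2 = (∑ i ∈ 𝒦 ∪ 𝒦', |d i|) ^ 2 := by rw [hsupp]
      _ ≤ (((𝒦 ∪ 𝒦').card : ℕ) : ℝ) * ∑ i ∈ 𝒦 ∪ 𝒦', d i ^ 2 := hcs
      _ ≤ 2 * (K:ℝ) * L2 := by
          apply mul_le_mul hcard hsub2 hL2nn (by linarith)
  -- final assembly
  by_cases hcase : 1 - (2 * (K:ℝ) - 1) * μ ≤ 0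
  · have harg : (1 - (2 * (K:ℝ) - 1) * μ) / ((K:ℝ) * ((K:ℝ) - 1)) ≤ 0 :=
      div_nonpos_iff.mpr (Or.inr ⟨hcase, hKK0.le⟩)
    rw [Real.sqrt_eq_zero'.mpr harg]
    exact norm_nonneg _
  · push_neg at hcase
    have hμL1 : μ * L1 ^ 2 ≤ μ * (2 * (K:ℝ) * L2) := mul_le_mul_of_nonneg_left hL1sq hμ0
    have hL2nn : (0:ℝ) ≤ L2 := by rw [hL2def]; positivity
    have step2 : (1 - (2 * (K:ℝ) - 1) * μ) * L2 ≤ ‖x‖ ^ 2 := by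
      rw [hinner, hsplit]
      nlinarith
    have step1 : (1 - (2 * (K:ℝ) - 1) * μ) * ((K:ℝ) * ((K:ℝ) - 1))⁻¹
        ≤ (1 - (2 * (K:ℝ) - 1) * μ) * L2 :=
      mul_le_mul_of_nonneg_left hL2lb hcase.le
    have hfinal : (1 - (2 * (K:ℝ) - 1) * μ) / ((K:ℝ) * ((K:ℝ) - 1)) ≤ ‖x‖ ^ 2 := by
      rw [div_eq_mul_inv]; linarith
    calc Real.sqrt ((1 - (2 * (K:ℝ) - 1) * μ) / ((K:ℝ) * ((K:ℝ) - 1)))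
        ≤ Real.sqrt (‖x‖ ^ 2) := Real.sqrt_le_sqrt hfinal
      _ = ‖x‖ := Real.sqrt_sq (norm_nonneg _)
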